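/- Let (V,g) be an n-dimensional (n ≥ 4) real vector space with a nondegenerate symmetric bilinear form g, let B be a generalized curvature tensor on V, A a symmetric bilinear form, and suppose T = α₁·B + (α₂/2)·A∧A + α₃·g∧A + α₄·g∧A² + (α₅/2)·g∧g for real numbers α₁,…,α₅. Then Weyl(T) = α₁·Weyl(B) + (α₂/(n−2))·E(A), where for a generalized curvature tensor T, Weyl(T) = T − (1/(n−2))·g∧Ric(T) + (κ(T)/(2(n−2)(n−1)))·g∧g, and E(A) = g∧A² + ((n−2)/2)·A∧A − tr(A)·g∧A + ((tr(A)²−tr(A²))/(2(n−1)))·g∧g. -/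

import Mathlib

variable {V : Type*} [AddCommGroup V] [Module ℝ V]

/-- Kulkarni–Nomizu product of two (0,2)-tensors. -/
def kn (A B : V → V → ℝ) : V → V → V → V → ℝ := fun x1 x2 x3 x4 =>
  A x1 x4 * B x2 x3 + A x2 x3 * B x1 x4 - A x1 x3 * B x2 x4 - A x2 x4 * B x1 x3

/-- The endomorphism `(X ∧_A Y)Z = A(Y,Z)X − A(X,Z)Y`. -/
def wedgeV (A : V → V → ℝ) (x y z : V) : V := A y z • x - A x z • y

/-- Tachibana tensor `Q(A,T)` of a (0,2)-tensor `A` and a (0,4)-tensor `T`. -/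
def Q4 (A : V → V → ℝ) (T : V → V → V → V → ℝ) : V → V → V → V → V → V → ℝ :=
  fun x1 x2 x3 x4 x y =>
    -(T (wedgeV A x y x1) x2 x3 x4) - T x1 (wedgeV A x y x2) x3 x4
      - T x1 x2 (wedgeV A x y x3) x4 - T x1 x2 x3 (wedgeV A x y x4)

/-- A generalized curvature tensor: skew in the first and last pairs, symmetric under
pair interchange, and satisfying the first Bianchi identity. -/
def IsGenCurv (R : V → V → V → V → ℝ) : Prop :=
  (∀ x₁ x₂ x₃ x₄, R x₂ x₁ x₃ x₄ = - R x₁ x₂ x₃ x₄) ∧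
  (∀ x₁ x₂ x₃ x₄, R x₁ x₂ x₄ x₃ = - R x₁ x₂ x₃ x₄) ∧
  (∀ x₁ x₂ x₃ x₄, R x₁ x₂ x₃ x₄ = R x₃ x₄ x₁ x₂) ∧
  (∀ x₁ x₂ x₃ x₄, R x₁ x₂ x₃ x₄ + R x₂ x₃ x₁ x₄ + R x₃ x₁ x₂ x₄ = 0)

/-- if `T = α₁·B + (α₂/2)·A∧A + α₃·g∧A + α₄·g∧A² + (α₅/2)·g∧g`,
then `Weyl(T) = α₁·Weyl(B) + (α₂/(n−2))·E(A)`. -/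
theorem stmt_14 {V : Type*} [AddCommGroup V] [Module ℝ V] [FiniteDimensional ℝ V]
    (n : ℕ) (hn4 : 4 ≤ n) (hdim : Module.finrank ℝ V = n)
    (g A : V →ₗ[ℝ] V →ₗ[ℝ] ℝ)
    (hg : ∀ x y, g x y = g y x)
    (hgnd : ∀ x : V, (∀ y : V, g x y = 0) → x = 0)
    (hA : ∀ x y, A x y = A y x)
    (a : V →ₗ[ℝ] V) (ha : ∀ x y, g (a x) y = A x y)
    (e : Module.Basis (Fin n) ℝ V) (ε : Fin n → ℝ) (hε : ∀ i, ε i = 1 ∨ ε i = -1)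
    (horth : ∀ i j, g (e i) (e j) = if i = j then ε i else 0)
    (B T : V → V → V → V → ℝ) (hBcurv : IsGenCurv B) (hTcurv : IsGenCurv T)
    (RicB RicT : V → V → ℝ)
    (hRicB : ∀ x y, RicB x y = ∑ i, ε i * B (e i) x y (e i))
    (hRicT : ∀ x y, RicT x y = ∑ i, ε i * T (e i) x y (e i))
    (α₁ α₂ α₃ α₄ α₅ : ℝ)
    (hT : ∀ x₁ x₂ x₃ x₄ : V,
      T x₁ x₂ x₃ x₄
        = α₁ * B x₁ x₂ x₃ x₄
          + (α₂ / 2) * kn (fun u v => A u v) (fun u v => A u v) x₁ x₂ x₃ x₄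
          + α₃ * kn (fun u v => g u v) (fun u v => A u v) x₁ x₂ x₃ x₄
          + α₄ * kn (fun u v => g u v) (fun u v => A (a u) v) x₁ x₂ x₃ x₄
          + (α₅ / 2) * kn (fun u v => g u v) (fun u v => g u v) x₁ x₂ x₃ x₄) :
    ∀ x₁ x₂ x₃ x₄ : V,
      T x₁ x₂ x₃ x₄
          - (1 / ((n : ℝ) - 2)) * kn (fun u v => g u v) RicT x₁ x₂ x₃ x₄
          + ((∑ i, ε i * RicT (e i) (e i)) / (2 * ((n : ℝ) - 2) * ((n : ℝ) - 1)))
              * kn (fun u v => g u v) (fun u v => g u v) x₁ x₂ x₃ x₄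
        = α₁ * (B x₁ x₂ x₃ x₄
              - (1 / ((n : ℝ) - 2)) * kn (fun u v => g u v) RicB x₁ x₂ x₃ x₄
              + ((∑ i, ε i * RicB (e i) (e i)) / (2 * ((n : ℝ) - 2) * ((n : ℝ) - 1)))
                  * kn (fun u v => g u v) (fun u v => g u v) x₁ x₂ x₃ x₄)
          + (α₂ / ((n : ℝ) - 2))
              * (kn (fun u v => g u v) (fun u v => A (a u) v) x₁ x₂ x₃ x₄
                  + (((n : ℝ) - 2) / 2) * kn (fun u v => A u v) (fun u v => A u v) x₁ x₂ x₃ x₄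
                  - LinearMap.trace ℝ V a * kn (fun u v => g u v) (fun u v => A u v) x₁ x₂ x₃ x₄
                  + (((LinearMap.trace ℝ V a) ^ 2 - LinearMap.trace ℝ V (a ∘ₗ a))
                        / (2 * ((n : ℝ) - 1)))
                      * kn (fun u v => g u v) (fun u v => g u v) x₁ x₂ x₃ x₄) := by
  -- basis expansion
  have hexp : ∀ x : V, x = ∑ i, (ε i * g x (e i)) • e i := by
    intro x
    have hb : ∀ j, g (x - ∑ i, (ε i * g x (e i)) • e i) (e j) = 0 := by
      intro j
      simp only [map_sub, map_sum, map_smul, LinearMap.sub_apply, LinearMap.sum_apply,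
        LinearMap.smul_apply, smul_eq_mul]
      rw [Finset.sum_eq_single j (fun i _ hij => by rw [horth i j]; simp [hij])
        (by intro h; exact absurd (Finset.mem_univ j) h)]
      rw [horth j j]
      rcases hε j with h | h <;> rw [h] <;> simp
    have hmap : g (x - ∑ i, (ε i * g x (e i)) • e i) = 0 := by
      apply e.ext
      intro j
      rw [hb j]; rfl
    exact sub_eq_zero.mp (hgnd _ (fun z => by rw [hmap]; rfl))
  -- contraction lemma
  have hcon : ∀ (f : V →ₗ[ℝ] ℝ) (x : V), ∑ i, ε i * g x (e i) * f (e i) = f x := by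
    intro f x
    conv_rhs => rw [hexp x]
    rw [map_sum]
    exact Finset.sum_congr rfl fun i _ => by rw [map_smul, smul_eq_mul]
  have hrepr : ∀ (x : V) (j : Fin n), e.repr x j = ε j * g x (e j) := by
    intro x j
    conv_lhs => rw [hexp x]
    simp [Finsupp.single_apply, Finset.sum_ite_eq]
  set t : ℝ := LinearMap.trace ℝ V a with ht
  set t2 : ℝ := LinearMap.trace ℝ V (a ∘ₗ a) with ht2
  -- traces
  have htrace : ∀ b : V →ₗ[ℝ] V, LinearMap.trace ℝ V b = ∑ i, ε i * g (b (e i)) (e i) := by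
    intro b
    rw [LinearMap.trace_eq_matrix_trace ℝ e b, Matrix.trace]
    refine Finset.sum_congr rfl fun i _ => ?_
    rw [Matrix.diag_apply, LinearMap.toMatrix_apply, hrepr]
  have c2 : ∑ i, ε i * A (e i) (e i) = t := by
    rw [ht, htrace a]
    exact Finset.sum_congr rfl fun i _ => by rw [ha]
  have c3 : ∑ i, ε i * A (a (e i)) (e i) = t2 := by
    rw [ht2, htrace (a ∘ₗ a)]
    refine Finset.sum_congr rfl fun i _ => ?_
    rw [LinearMap.comp_apply, ha]
  have c1 : ∑ i, ε i * g (e i) (e i) = (n : ℝ) := by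
    have : ∀ i : Fin n, ε i * g (e i) (e i) = 1 := by
      intro i
      rw [horth i i, if_pos rfl]
      rcases hε i with h | h <;> rw [h] <;> norm_num
    simp [this]
  -- cross contractions (for fixed x y)
  have c4 : ∀ x y : V, ∑ i, ε i * (g (e i) y * g x (e i)) = g x y := by
    intro x y
    have := hcon (g x) y
    rw [← this]
    exact Finset.sum_congr rfl fun i _ => by rw [hg (e i) y]; ring
  have c5 : ∀ x y : V, ∑ i, ε i * (g (e i) y * A x (e i)) = A x y := by
    intro x y
    have := hcon (A x) y
    rw [← this]
    exact Finset.sum_congr rfl fun i _ => by rw [hg (e i) y]; ring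
  have c6 : ∀ x y : V, ∑ i, ε i * (A (e i) y * g x (e i)) = A x y := by
    intro x y
    have h1 := hcon (A y) x
    calc ∑ i, ε i * (A (e i) y * g x (e i)) = ∑ i, ε i * g x (e i) * A y (e i) :=
          Finset.sum_congr rfl fun i _ => by rw [hA (e i) y]; ring
      _ = A y x := h1
      _ = A x y := hA y x
  have c7 : ∀ x y : V, ∑ i, ε i * (A (e i) y * A x (e i)) = A (a x) y := by
    intro x y
    have h1 := hcon (A y) (a x)
    calc ∑ i, ε i * (A (e i) y * A x (e i)) = ∑ i, ε i * g (a x) (e i) * A y (e i) :=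
          Finset.sum_congr rfl fun i _ => by rw [hA (e i) y, ← ha x (e i)]; ring
      _ = A y (a x) := h1
      _ = A (a x) y := hA y (a x)
  have c8 : ∀ x y : V, ∑ i, ε i * (g (e i) y * A (a x) (e i)) = A (a x) y := by
    intro x y
    have := hcon (A (a x)) y
    rw [← this]
    exact Finset.sum_congr rfl fun i _ => by rw [hg (e i) y]; ring
  have c9 : ∀ x y : V, ∑ i, ε i * (A (a (e i)) y * g x (e i)) = A (a x) y := by
    intro x y
    have h1 := hcon ((g y).comp (a ∘ₗ a)) x
    calc ∑ i, ε i * (A (a (e i)) y * g x (e i))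
        = ∑ i, ε i * g x (e i) * ((g y).comp (a ∘ₗ a)) (e i) :=
          Finset.sum_congr rfl fun i _ => by
            simp only [LinearMap.comp_apply]
            rw [← ha (a (e i)) y, hg (a (a (e i))) y]; ring
      _ = ((g y).comp (a ∘ₗ a)) x := h1
      _ = A (a x) y := by
          simp only [LinearMap.comp_apply]
          rw [hg y (a (a x)), ha (a x) y]
  -- Ricci of T
  have hRicT' : ∀ x y : V, RicT x y
      = α₁ * RicB x y + α₂ * (t * A x y - A (a x) y)
        + α₃ * (((n : ℝ) - 2) * A x y + t * g x y)
        + α₄ * (((n : ℝ) - 2) * A (a x) y + t2 * g x y)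
        + α₅ * (((n : ℝ) - 1) * g x y) := by
    intro x y
    rw [hRicT]
    have hs : ∑ i, ε i * T (e i) x y (e i)
        = α₁ * (∑ i, ε i * B (e i) x y (e i))
          + (α₂ * A x y) * (∑ i, ε i * A (e i) (e i))
          - α₂ * (∑ i, ε i * (A (e i) y * A x (e i)))
          + (α₃ * A x y) * (∑ i, ε i * g (e i) (e i))
          + (α₃ * g x y) * (∑ i, ε i * A (e i) (e i))
          - α₃ * (∑ i, ε i * (g (e i) y * A x (e i)))
          - α₃ * (∑ i, ε i * (A (e i) y * g x (e i)))
          + (α₄ * A (a x) y) * (∑ i, ε i * g (e i) (e i))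
          + (α₄ * g x y) * (∑ i, ε i * A (a (e i)) (e i))
          - α₄ * (∑ i, ε i * (g (e i) y * A (a x) (e i)))
          - α₄ * (∑ i, ε i * (A (a (e i)) y * g x (e i)))
          + (α₅ * g x y) * (∑ i, ε i * g (e i) (e i))
          - α₅ * (∑ i, ε i * (g (e i) y * g x (e i))) := by
      simp only [Finset.mul_sum, ← Finset.sum_add_distrib, ← Finset.sum_sub_distrib]
      refine Finset.sum_congr rfl fun i _ => ?_
      rw [hT]
      simp only [kn]
      ring
    rw [hs, ← hRicB, c2, c7, c1, c5, c6, c3, c8, c9, c4]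
    ring
  -- scalar curvature of T
  have hκT : (∑ i, ε i * RicT (e i) (e i))
      = α₁ * (∑ i, ε i * RicB (e i) (e i)) + α₂ * (t * t - t2)
        + α₃ * (2 * ((n : ℝ) - 1) * t) + α₄ * (2 * ((n : ℝ) - 1) * t2)
        + α₅ * ((n : ℝ) * ((n : ℝ) - 1)) := by
    have hs : ∑ i, ε i * RicT (e i) (e i)
        = α₁ * (∑ i, ε i * RicB (e i) (e i))
          + (α₂ * t) * (∑ i, ε i * A (e i) (e i))
          - α₂ * (∑ i, ε i * A (a (e i)) (e i))
          + (α₃ * ((n : ℝ) - 2)) * (∑ i, ε i * A (e i) (e i))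
          + (α₃ * t) * (∑ i, ε i * g (e i) (e i))
          + (α₄ * ((n : ℝ) - 2)) * (∑ i, ε i * A (a (e i)) (e i))
          + (α₄ * t2) * (∑ i, ε i * g (e i) (e i))
          + (α₅ * ((n : ℝ) - 1)) * (∑ i, ε i * g (e i) (e i)) := by
      simp only [Finset.mul_sum, ← Finset.sum_add_distrib, ← Finset.sum_sub_distrib]
      refine Finset.sum_congr rfl fun i _ => ?_
      rw [hRicT' (e i) (e i)]
      ring
    rw [hs, c2, c3, c1]
    ring
  -- final assembly
  have hn : (4 : ℝ) ≤ (n : ℝ) := by exact_mod_cast hn4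
  have hn2 : (n : ℝ) - 2 ≠ 0 := by intro h; linarith
  have hn1 : (n : ℝ) - 1 ≠ 0 := by intro h; linarith
  intro x₁ x₂ x₃ x₄
  rw [hκT, hT x₁ x₂ x₃ x₄]
  simp only [kn]
  rw [hRicT' x₂ x₃, hRicT' x₁ x₄, hRicT' x₂ x₄, hRicT' x₁ x₃]
  field_simp
  ring
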